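/- arXiv:2408.05441 — 2 statements merged into one kernel-verified Lean document; each statement's English description precedes it below -/
import Mathlib

section
/- Let f(z) = (2/3)(e^{i2π/3}/(z-1) - (1/2)/(z+1/2) + e^{-i2π/3}/(z+2)) and g(z) = -1 + e^{iπ/3}/z - e^{-iπ/3}/(z+1), and define ḡ(z) := conj(g(conj(z))). Then for all complex z not in {-2, -1, -1/2, 0, 1}, f(z)·ḡ(z) = 1/(z-1) - 1/z - 1/(z+1) + 1/(z+2) + 1/(z+1/2). In particular f·ḡ is a rational function with real coefficients. -/
open Complex

noncomputable def hexF (z : ℂ) : ℂ :=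
  (2/3) * (Complex.exp (2 * Real.pi * Complex.I / 3) / (z - 1)
    - (1/2) / (z + 1/2) + Complex.exp (-(2 * Real.pi * Complex.I) / 3) / (z + 2))

noncomputable def hexG (z : ℂ) : ℂ :=
  -1 + Complex.exp (Real.pi * Complex.I / 3) / z
    - Complex.exp (-(Real.pi * Complex.I) / 3) / (z + 1)

noncomputable def hexGbar (z : ℂ) : ℂ := starRingEnd ℂ (hexG (starRingEnd ℂ z))

lemma exp_eq' (x : ℝ) : Complex.exp ((x:ℂ) * Complex.I) = (Real.cos x : ℂ) + (Real.sin x : ℂ) * Complex.I := by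
  rw [Complex.exp_mul_I, Complex.ofReal_cos, Complex.ofReal_sin]

theorem stmt_0 :
    ∀ z : ℂ, z ∉ ({-2, -1, -1/2, 0, 1} : Set ℂ) →
      hexF z * hexGbar z =
        1 / (z - 1) - 1 / z - 1 / (z + 1) + 1 / (z + 2) + 1 / (z + 1/2) := by
  intro z hz
  simp only [Set.mem_insert_iff, Set.mem_singleton_iff, not_or] at hz
  obtain ⟨h1, h2, h3, h4, h5⟩ := hz
  set S : ℂ := (Real.sqrt 3 : ℂ) with hSdef
  have hS : S * S = 3 := by
    rw [hSdef, ← Complex.ofReal_mul, Real.mul_self_sqrt (by norm_num)]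
    norm_num
  have c23 : Real.cos (2*Real.pi/3) = -(1/2) := by
    rw [show (2*Real.pi/3) = Real.pi - Real.pi/3 by ring, Real.cos_pi_sub, Real.cos_pi_div_three]
  have s23 : Real.sin (2*Real.pi/3) = Real.sqrt 3 / 2 := by
    rw [show (2*Real.pi/3) = Real.pi - Real.pi/3 by ring, Real.sin_pi_sub, Real.sin_pi_div_three]
  have e1 : Complex.exp (Real.pi * Complex.I / 3) = 1/2 + S/2 * Complex.I := by
    rw [show (Real.pi : ℂ) * Complex.I / 3 = ((Real.pi/3 : ℝ):ℂ) * Complex.I by push_cast; ring,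
      exp_eq', Real.cos_pi_div_three, Real.sin_pi_div_three]
    push_cast; ring
  have e2 : Complex.exp (-(Real.pi * Complex.I) / 3) = 1/2 - S/2 * Complex.I := by
    rw [show -((Real.pi:ℂ) * Complex.I) / 3 = ((-(Real.pi/3) : ℝ):ℂ) * Complex.I by push_cast; ring,
      exp_eq', Real.cos_neg, Real.sin_neg, Real.cos_pi_div_three, Real.sin_pi_div_three]
    push_cast; ring
  have e3 : Complex.exp (2 * Real.pi * Complex.I / 3) = -(1/2) + S/2 * Complex.I := by
    rw [show 2 * (Real.pi:ℂ) * Complex.I / 3 = ((2*Real.pi/3 : ℝ):ℂ) * Complex.I by push_cast; ring,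
      exp_eq', c23, s23]
    push_cast; ring
  have e4 : Complex.exp (-(2 * Real.pi * Complex.I) / 3) = -(1/2) - S/2 * Complex.I := by
    rw [show -(2 * (Real.pi:ℂ) * Complex.I) / 3 = ((-(2*Real.pi/3) : ℝ):ℂ) * Complex.I by push_cast; ring,
      exp_eq', Real.cos_neg, Real.sin_neg, c23, s23]
    push_cast; ring
  have hgbar : hexGbar z = -1 + (1/2 - S/2 * Complex.I)/z - (1/2 + S/2 * Complex.I)/(z+1) := by
    rw [hexGbar, hexG, e1, e2]
    simp only [map_add, map_sub, map_div₀, map_neg, map_one, map_mul, Complex.conj_I,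
      Complex.conj_conj, hSdef, Complex.conj_ofReal, map_ofNat]
    ring
  rw [hexF, e3, e4, hgbar]
  have hz1 : z - 1 ≠ 0 := sub_ne_zero.mpr h5
  have hz2 : z + 2 ≠ 0 := by intro h; apply h1; linear_combination h
  have hz3 : z + 1 ≠ 0 := by intro h; apply h2; linear_combination h
  have hz0 : z ≠ 0 := h4
  have hz4 : z + 1/2 ≠ 0 := by intro h; apply h3; linear_combination h
  have hz4' : z * 2 + 1 ≠ 0 := by intro h; apply h3; linear_combination h/2
  have hz5 : 2 * z + 1 ≠ 0 := by intro h; apply h3; linear_combination h/2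
  field_simp
  linear_combination (-3*(2*z+1)^2) * S^2 * Complex.I_sq + (3*(2*z+1)^2) * hS
end

section
/- Let ω = e^{i2π/3}. Then the function g(z) = -1 + e^{iπ/3}/z - e^{-iπ/3}/(z+1) satisfies g(ω) = 0 and g'(ω) = 0, and the function f(z) = (2/3)(e^{i2π/3}/(z-1) - (1/2)/(z+1/2) + e^{-i2π/3}/(z+2)) satisfies f(ω) = 0 and f'(ω) = 0. That is, both f and g have a zero of order at least 2 at ω. -/
open Complex

lemma omega_cube : Complex.exp (2 * Real.pi * Complex.I / 3) ^ 3 = 1 := by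
  rw [← Complex.exp_nat_mul]
  rw [show ((3:ℕ):ℂ) * (2 * Real.pi * Complex.I / 3) = 2 * Real.pi * Complex.I by push_cast; ring]
  exact Complex.exp_two_pi_mul_I

lemma omega_ne_one : Complex.exp (2 * Real.pi * Complex.I / 3) ≠ 1 := by
  intro h
  rw [Complex.exp_eq_one_iff] at h
  obtain ⟨n, hn⟩ := h
  have hπ : (Real.pi : ℂ) ≠ 0 := by exact_mod_cast Real.pi_ne_zero
  have hI := Complex.I_ne_zero
  have h1 : (1 : ℂ) * (Real.pi * Complex.I) = (3 * n) * (Real.pi * Complex.I) := by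
    linear_combination (3/2 : ℂ) * hn
  have h2 : (1 : ℂ) = 3 * n := mul_right_cancel₀ (mul_ne_zero hπ hI) h1
  have h3 : (1 : ℤ) = 3 * n := by exact_mod_cast h2
  omega

theorem stmt_18 :
    hexG (Complex.exp (2 * Real.pi * Complex.I / 3)) = 0 ∧
    deriv hexG (Complex.exp (2 * Real.pi * Complex.I / 3)) = 0 ∧
    hexF (Complex.exp (2 * Real.pi * Complex.I / 3)) = 0 ∧
    deriv hexF (Complex.exp (2 * Real.pi * Complex.I / 3)) = 0 := by
  set w : ℂ := Complex.exp (2 * Real.pi * Complex.I / 3) with hw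
  have hw0 : w ≠ 0 := Complex.exp_ne_zero _
  have hw3 : w ^ 3 = 1 := omega_cube
  have hne1 : w ≠ 1 := omega_ne_one
  have hw2 : w ^ 2 + w + 1 = 0 := by
    have h : (w - 1) * (w ^ 2 + w + 1) = 0 := by linear_combination hw3
    rcases mul_eq_zero.mp h with h | h
    · exact absurd (sub_eq_zero.mp h) hne1
    · exact h
  -- nonvanishing of denominators
  have hd1 : w + 1 ≠ 0 := by
    rw [show w + 1 = -w^2 by linear_combination hw2]
    simpa using pow_ne_zero 2 hw0
  have hd2 : w - 1 ≠ 0 := sub_ne_zero.mpr hne1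
  have hd3 : w + 1/2 ≠ 0 := by
    intro h
    rw [show w = -(1/2 : ℂ) by linear_combination h] at hw3
    norm_num at hw3
  have hd4 : w + 2 ≠ 0 := by
    intro h
    rw [show w = -(2 : ℂ) by linear_combination h] at hw3
    norm_num at hw3
  -- the exponential constants as powers of w
  set e1 : ℂ := Complex.exp (Real.pi * Complex.I / 3) with he1def
  set e2 : ℂ := Complex.exp (-(Real.pi * Complex.I) / 3) with he2def
  set e3 : ℂ := Complex.exp (-(2 * Real.pi * Complex.I) / 3) with he3def
  have hm1 : e1 * w = -1 := by
    rw [he1def, hw, ← Complex.exp_add,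
      show (Real.pi : ℂ) * Complex.I / 3 + 2 * Real.pi * Complex.I / 3 = Real.pi * Complex.I by ring]
    exact Complex.exp_pi_mul_I
  have he1 : e1 = -w ^ 2 := by linear_combination w ^ 2 * hm1 - e1 * hw3
  have hm2 : e2 * e1 = 1 := by
    rw [he1def, he2def, ← Complex.exp_add,
      show -((Real.pi : ℂ) * Complex.I) / 3 + Real.pi * Complex.I / 3 = 0 by ring]
    exact Complex.exp_zero
  have he2 : e2 = -w := by
    have hm2' : e2 * (-w ^ 2) = 1 := by rw [← he1]; exact hm2
    linear_combination (-w) * hm2' - e2 * hw3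
  have hm3 : e3 * w = 1 := by
    rw [he3def, hw, ← Complex.exp_add,
      show -(2 * (Real.pi : ℂ) * Complex.I) / 3 + 2 * Real.pi * Complex.I / 3 = 0 by ring]
    exact Complex.exp_zero
  have he3 : e3 = w ^ 2 := by linear_combination w ^ 2 * hm3 - e3 * hw3
  refine ⟨?_, ?_, ?_, ?_⟩
  · -- hexG ω = 0
    show -1 + e1 / w - e2 / (w + 1) = 0
    have f1 : -w ^ 2 / w = -w := by rw [div_eq_iff hw0]; ring
    have f2 : -w / (w + 1) = w ^ 2 := by
      rw [div_eq_iff hd1]; linear_combination -hw3 - hw2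
    rw [he1, he2, f1, f2]
    linear_combination -hw2
  · -- (hexG)'(ω) = 0
    have hG : HasDerivAt hexG
        ((0 * w - e1 * 1) / w ^ 2 - (0 * (w + 1) - e2 * 1) / (w + 1) ^ 2) w := by
      have h1 : HasDerivAt (fun z : ℂ => e1 / z) ((0 * w - e1 * 1) / w ^ 2) w :=
        (hasDerivAt_const w e1).div (hasDerivAt_id w) hw0
      have h2 : HasDerivAt (fun z : ℂ => e2 / (z + 1))
          ((0 * (w + 1) - e2 * 1) / (w + 1) ^ 2) w :=
        (hasDerivAt_const w e2).div ((hasDerivAt_id w).add_const 1) hd1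
      have h := ((hasDerivAt_const w (-1 : ℂ)).add h1).sub h2
      have hGeq : hexG = fun z : ℂ => -1 + e1 / z - e2 / (z + 1) := by funext z; rfl
      rw [hGeq]
      exact h.congr_deriv (by ring)
    rw [hG.deriv, he1, he2,
      div_sub_div _ _ (pow_ne_zero 2 hw0) (pow_ne_zero 2 hd1), div_eq_zero_iff]
    left
    linear_combination (w ^ 2) * hw2
  · -- hexF ω = 0
    show (2/3 : ℂ) * (w / (w - 1) - (1/2) / (w + 1/2) + e3 / (w + 2)) = 0
    rw [he3, mul_eq_zero]
    right
    rw [div_sub_div _ _ hd2 hd3, div_add_div _ _ (mul_ne_zero hd2 hd3) hd4,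
      div_eq_zero_iff]
    left
    linear_combination (w ^ 2 - w / 2 + 1) * hw2
  · -- (hexF)'(ω) = 0
    have hF : HasDerivAt hexF
        ((2/3 : ℂ) * ((0 * (w - 1) - w * 1) / (w - 1) ^ 2
          - (0 * (w + 1/2) - (1/2) * 1) / (w + 1/2) ^ 2
          + (0 * (w + 2) - e3 * 1) / (w + 2) ^ 2)) w := by
      have h1 : HasDerivAt (fun z : ℂ => w / (z - 1))
          ((0 * (w - 1) - w * 1) / (w - 1) ^ 2) w :=
        (hasDerivAt_const w w).div ((hasDerivAt_id w).sub_const 1) hd2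
      have h2 : HasDerivAt (fun z : ℂ => (1/2 : ℂ) / (z + 1/2))
          ((0 * (w + 1/2) - (1/2) * 1) / (w + 1/2) ^ 2) w :=
        (hasDerivAt_const w (1/2 : ℂ)).div ((hasDerivAt_id w).add_const (1/2)) hd3
      have h3 : HasDerivAt (fun z : ℂ => e3 / (z + 2))
          ((0 * (w + 2) - e3 * 1) / (w + 2) ^ 2) w :=
        (hasDerivAt_const w e3).div ((hasDerivAt_id w).add_const 2) hd4
      have hFeq : hexF = fun z : ℂ =>
          (2/3 : ℂ) * (w / (z - 1) - (1/2) / (z + 1/2) + e3 / (z + 2)) := by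
        funext z; rfl
      rw [hFeq]
      exact ((h1.sub h2).add h3).const_mul (2/3 : ℂ)
    rw [hF.deriv, he3, mul_eq_zero]
    right
    rw [div_sub_div _ _ (pow_ne_zero 2 hd2) (pow_ne_zero 2 hd3),
      div_add_div _ _ (mul_ne_zero (pow_ne_zero 2 hd2) (pow_ne_zero 2 hd3)) (pow_ne_zero 2 hd4),
      div_eq_zero_iff]
    left
    linear_combination (-w ^ 4 + w ^ 3 - (15/4) * w ^ 2 - 5 * w + 2) * hw2
end
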